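/- Let n ≥ 2 and A a ring with enough idempotents. For any class C of unital left A-modules of type FP_n, the class ^⊤C = { N unital right A-module : Tor₁^A(N, F) = 0 for all F ∈ C } is closed under products (taken in the category of unital right A-modules). -/

import Mathlib

open MulOpposite

universe u v w w' w₂ w₃

namespace EIMod

/-- A premodule over a nonunital ring `A`: an additive group with an associative,
biadditive scalar multiplication. -/
class PreMod (A : Type u) (M : Type w) [NonUnitalRing A] [AddCommGroup M] extends SMul A M where
  smul_add' : ∀ (a : A) (m n : M), a • (m + n) = a • m + a • n
  add_smul' : ∀ (a b : A) (m : M), (a + b) • m = a • m + b • m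
  mul_smul' : ∀ (a b : A) (m : M), (a * b) • m = a • (b • m)

namespace PreMod

variable {A : Type u} [NonUnitalRing A]

section Lemmas

variable {M : Type w} [AddCommGroup M] [PreMod A M]

lemma psmul_zero (a : A) : a • (0 : M) = 0 := by
  have h := smul_add' a (0 : M) 0
  rw [add_zero] at h
  exact (left_eq_add.mp h)

lemma psmul_neg (a : A) (m : M) : a • (-m) = -(a • m) := by
  have h := smul_add' a m (-m)
  rw [add_neg_cancel, psmul_zero] at h
  exact (eq_neg_of_add_eq_zero_right h.symm)

lemma pzero_smul (m : M) : (0 : A) • m = 0 := by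
  have h := add_smul' (0 : A) 0 m
  rw [add_zero] at h
  exact (left_eq_add.mp h)

lemma pneg_smul (a : A) (m : M) : (-a) • m = -(a • m) := by
  have h := add_smul' a (-a) m
  rw [add_neg_cancel, pzero_smul] at h
  exact (eq_neg_of_add_eq_zero_right h.symm)

/-- Scalar multiplication by a fixed `a : A` as an additive map. -/
def smulHom (M : Type w) [AddCommGroup M] [PreMod A M] (a : A) : M →+ M :=
  AddMonoidHom.mk' (fun m => a • m) (smul_add' a)

@[simp] lemma smulHom_apply (a : A) (m : M) : smulHom M a m = a • m := rfl

end Lemmas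

instance : PreMod A A where
  smul := (· * ·)
  smul_add' := mul_add
  add_smul' := add_mul
  mul_smul' := mul_assoc

lemma smul_def (a b : A) : a • b = a * b := rfl

instance : PreMod Aᵐᵒᵖ A where
  smul a x := x * a.unop
  smul_add' a m n := add_mul m n a.unop
  add_smul' a b m := by show m * (a + b).unop = m * a.unop + m * b.unop; rw [unop_add, mul_add]
  mul_smul' a b m := by
    show m * (a * b).unop = (m * b.unop) * a.unop
    rw [unop_mul, mul_assoc]

lemma op_smul_def (a : Aᵐᵒᵖ) (x : A) : a • x = x * a.unop := rfl

instance instPi {ι : Type v} (β : ι → Type w) [∀ i, AddCommGroup (β i)]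
    [∀ i, PreMod A (β i)] : PreMod A (∀ i, β i) where
  smul a f i := a • f i
  smul_add' a f g := funext fun i => smul_add' a (f i) (g i)
  add_smul' a b f := funext fun i => add_smul' a b (f i)
  mul_smul' a b f := funext fun i => mul_smul' a b (f i)

lemma pi_smul_apply {ι : Type v} {β : ι → Type w} [∀ i, AddCommGroup (β i)]
    [∀ i, PreMod A (β i)] (a : A) (f : ∀ i, β i) (i : ι) : (a • f) i = a • f i := rfl

noncomputable instance instFinsupp {σ : Type v} : PreMod A (σ →₀ A) where
  smul a f := Finsupp.mapRange (a * ·) (mul_zero a) f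
  smul_add' a f g := by
    ext s
    simp [Finsupp.mapRange_apply, mul_add]
  add_smul' a b f := by
    ext s
    simp [Finsupp.mapRange_apply, add_mul]
  mul_smul' a b f := by
    ext s
    simp [Finsupp.mapRange_apply, mul_assoc]

lemma finsupp_smul_single {σ : Type v} (a : A) (s : σ) (b : A) :
    a • (Finsupp.single s b) = Finsupp.single s (a * b) := by
  show Finsupp.mapRange (a * ·) (mul_zero a) (Finsupp.single s b) = _
  rw [Finsupp.mapRange_single]

end PreMod

open PreMod

variable (A : Type u) [NonUnitalRing A]

/-- The additive subgroup of `A`-linear additive maps between two premodules. -/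
def LHom (M : Type w) (N : Type w') [AddCommGroup M] [AddCommGroup N]
    [PreMod A M] [PreMod A N] : AddSubgroup (M →+ N) where
  carrier := {f | ∀ (a : A) (m : M), f (a • m) = a • f m}
  add_mem' := by
    intro f g hf hg a m
    simp only [AddMonoidHom.add_apply, hf a m, hg a m, PreMod.smul_add']
  zero_mem' := by
    intro a m
    simp [PreMod.psmul_zero]
  neg_mem' := by
    intro f hf a m
    simp [hf a m, PreMod.psmul_neg]

lemma mem_LHom {M : Type w} {N : Type w'} [AddCommGroup M] [AddCommGroup N]
    [PreMod A M] [PreMod A N] (f : M →+ N) :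
    f ∈ LHom A M N ↔ ∀ (a : A) (m : M), f (a • m) = a • f m := Iff.rfl

/-- A complete family of orthogonal idempotents for a nonunital ring:
`A` is a ring with enough idempotents. -/
class EnoughIdems {I : Type v} (e : I → A) : Prop where
  idem : ∀ i, e i * e i = e i
  orth : ∀ i j, i ≠ j → e i * e j = 0
  memLeft : ∀ a : A, a ∈ AddSubgroup.closure {x : A | ∃ i b, x = e i * b}
  memRight : ∀ a : A, a ∈ AddSubgroup.closure {x : A | ∃ i b, x = b * e i}

section OpInstance

variable {A}

lemma op_mem_closure {s : Set A} {t : Set Aᵐᵒᵖ} (hst : ∀ x ∈ s, op x ∈ t) {a : A}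
    (ha : a ∈ AddSubgroup.closure s) : op a ∈ AddSubgroup.closure t := by
  refine AddSubgroup.closure_induction
    (fun x hx => AddSubgroup.subset_closure (hst x hx)) (by rw [op_zero]; exact zero_mem _)
    (fun x y _ _ hx hy => by rw [op_add]; exact add_mem hx hy)
    (fun x _ hx => by rw [op_neg]; exact neg_mem hx) ha

lemma unop_mem_closure {s : Set Aᵐᵒᵖ} {t : Set A} (hst : ∀ x ∈ s, unop x ∈ t) {a : Aᵐᵒᵖ}
    (ha : a ∈ AddSubgroup.closure s) : unop a ∈ AddSubgroup.closure t := by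
  refine AddSubgroup.closure_induction
    (fun x hx => AddSubgroup.subset_closure (hst x hx)) (by rw [unop_zero]; exact zero_mem _)
    (fun x y _ _ hx hy => by rw [unop_add]; exact add_mem hx hy)
    (fun x _ hx => by rw [unop_neg]; exact neg_mem hx) ha

instance EnoughIdems.instOp {I : Type v} (e : I → A) [EnoughIdems A e] :
    EnoughIdems Aᵐᵒᵖ (fun i => op (e i)) where
  idem i := by rw [← op_mul, idem (e := e) i]
  orth i j h := by
    rw [← op_mul, orth (e := e) j i (Ne.symm h), op_zero]
  memLeft a := by
    have := op_mem_closure (s := {x : A | ∃ i b, x = b * e i})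
      (t := {x : Aᵐᵒᵖ | ∃ i b, x = op (e i) * b}) ?_ (memRight (e := e) a.unop)
    · simpa using this
    · rintro x ⟨i, b, rfl⟩
      exact ⟨i, op b, by rw [← op_mul]⟩
  memRight a := by
    have := op_mem_closure (s := {x : A | ∃ i b, x = e i * b})
      (t := {x : Aᵐᵒᵖ | ∃ i b, x = b * op (e i)}) ?_ (memLeft (e := e) a.unop)
    · simpa using this
    · rintro x ⟨i, b, rfl⟩
      exact ⟨i, op b, by rw [← op_mul]⟩

end OpInstance

section RA

variable {I : Type v} (e : I → A)

/-- `R_A(M) = ⊕ᵢ eᵢ M`, the largest unital submodule of a premodule `M`. -/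
def RA (M : Type w) [AddCommGroup M] [PreMod A M] : AddSubgroup M :=
  AddSubgroup.closure {x : M | ∃ (i : I) (y : M), x = e i • y}

variable {M : Type w} [AddCommGroup M] [PreMod A M]

lemma smul_mem_RA [EnoughIdems A e] (a : A) {m : M} (hm : m ∈ RA A e M) :
    a • m ∈ RA A e M := by
  have key : ∀ b : A, b ∈ AddSubgroup.closure {x : A | ∃ i c, x = e i * c} →
      ∀ y : M, b • y ∈ RA A e M := by
    intro b hb
    refine AddSubgroup.closure_induction ?_ ?_ ?_ ?_ hb
    · rintro x ⟨i, c, rfl⟩ y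
      rw [PreMod.mul_smul']
      exact AddSubgroup.subset_closure ⟨i, c • y, rfl⟩
    · intro y
      rw [PreMod.pzero_smul]
      exact zero_mem _
    · intro x y _ _ hx hy z
      rw [PreMod.add_smul']
      exact add_mem (hx z) (hy z)
    · intro x _ hx y
      rw [PreMod.pneg_smul]
      exact neg_mem (hx y)
  refine AddSubgroup.closure_induction ?_ ?_ ?_ ?_ hm
  · rintro x ⟨i, y, rfl⟩
    rw [← PreMod.mul_smul']
    exact key _ (EnoughIdems.memLeft (e := e) (a * e i)) y
  · rw [PreMod.psmul_zero]
    exact zero_mem _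
  · intro x y _ _ hx hy
    rw [PreMod.smul_add']
    exact add_mem hx hy
  · intro x _ hx
    rw [PreMod.psmul_neg]
    exact neg_mem hx

instance RA.instPreMod [EnoughIdems A e] : PreMod A ↥(RA A e M) where
  smul a x := ⟨a • x.1, smul_mem_RA A e a x.2⟩
  smul_add' a x y := Subtype.ext (PreMod.smul_add' a x.1 y.1)
  add_smul' a b x := Subtype.ext (PreMod.add_smul' a b x.1)
  mul_smul' a b x := Subtype.ext (PreMod.mul_smul' a b x.1)

lemma RA.coe_smul [EnoughIdems A e] (a : A) (x : ↥(RA A e M)) :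
    ((a • x : ↥(RA A e M)) : M) = a • (x : M) := rfl

/-- A premodule is unital when it coincides with its largest unital submodule. -/
def IsUnital (M : Type w) [AddCommGroup M] [PreMod A M] : Prop :=
  ∀ m : M, m ∈ RA A e M

end RA

section Ideals

/-- The left ideal `A·u = {x | x·u = x}` (for `u` idempotent), as a left premodule. -/
def rIdl (u : A) : AddSubgroup A where
  carrier := {x | x * u = x}
  zero_mem' := zero_mul u
  add_mem' := by
    intro x y hx hy
    show (x + y) * u = x + y
    rw [add_mul, hx, hy]
  neg_mem' := by
    intro x hx
    show (-x) * u = -x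
    rw [neg_mul, hx]

instance rIdl.instPreMod (u : A) : PreMod A ↥(rIdl A u) where
  smul a x := ⟨a * x.1, by
    have hx : x.1 * u = x.1 := x.2
    show (a * x.1) * u = a * x.1
    rw [mul_assoc, hx]⟩
  smul_add' a x y := Subtype.ext (mul_add a x.1 y.1)
  add_smul' a b x := Subtype.ext (add_mul a b x.1)
  mul_smul' a b x := Subtype.ext (mul_assoc a b x.1)

/-- The right ideal `u·A = {x | u·x = x}` (for `u` idempotent), as a right premodule. -/
def eIdl (u : A) : AddSubgroup A where
  carrier := {x | u * x = x}
  zero_mem' := mul_zero u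
  add_mem' := by
    intro x y hx hy
    show u * (x + y) = x + y
    rw [mul_add, hx, hy]
  neg_mem' := by
    intro x hx
    show u * (-x) = -x
    rw [mul_neg, hx]

instance eIdl.instPreMod (u : A) : PreMod Aᵐᵒᵖ ↥(eIdl A u) where
  smul a x := ⟨x.1 * a.unop, by
    have hx : u * x.1 = x.1 := x.2
    show u * (x.1 * a.unop) = x.1 * a.unop
    rw [← mul_assoc, hx]⟩
  smul_add' a x y := Subtype.ext (add_mul x.1 y.1 a.unop)
  add_smul' a b x := Subtype.ext (by show x.1 * (a + b).unop = x.1 * a.unop + x.1 * b.unop; rw [unop_add, mul_add])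
  mul_smul' a b x := Subtype.ext (by show x.1 * (a * b).unop = (x.1 * b.unop) * a.unop; rw [unop_mul, mul_assoc])

/-- The image `u•M` of scalar multiplication by `u`, as an additive subgroup. -/
def eSMulRange (u : A) (M : Type w) [AddCommGroup M] [PreMod A M] : AddSubgroup M :=
  (PreMod.smulHom M u).range

end Ideals

end EIMod
namespace EIMod

open PreMod MulOpposite

section Tensor

variable (A : Type u) [NonUnitalRing A]
variable (N : Type w) [AddCommGroup N] [PreMod Aᵐᵒᵖ N]
variable (M : Type w') [AddCommGroup M] [PreMod A M]

/-- Bilinearity and balancing relations defining the tensor product `N ⊗_A M`. -/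
def TensorRels : AddSubgroup (FreeAbelianGroup (N × M)) :=
  AddSubgroup.closure
    ({z | ∃ (n₁ : N) (n₂ : N) (m : M), z = FreeAbelianGroup.of (n₁ + n₂, m)
        - FreeAbelianGroup.of (n₁, m) - FreeAbelianGroup.of (n₂, m)} ∪
     {z | ∃ (n : N) (m₁ : M) (m₂ : M), z = FreeAbelianGroup.of (n, m₁ + m₂)
        - FreeAbelianGroup.of (n, m₁) - FreeAbelianGroup.of (n, m₂)} ∪
     {z | ∃ (n : N) (a : A) (m : M), z = FreeAbelianGroup.of (op a • n, m)
        - FreeAbelianGroup.of (n, a • m)})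

/-- The tensor product `N ⊗_A M` of a right `A`-premodule and a left `A`-premodule. -/
def Tensor : Type max w w' := FreeAbelianGroup (N × M) ⧸ TensorRels A N M

instance : AddCommGroup (Tensor A N M) :=
  inferInstanceAs (AddCommGroup (FreeAbelianGroup (N × M) ⧸ TensorRels A N M))

/-- The canonical generator `n ⊗ m` of `N ⊗_A M`. -/
def Tensor.mk (n : N) (m : M) : Tensor A N M :=
  QuotientAddGroup.mk (FreeAbelianGroup.of (n, m))

variable {A N M}
variable {N' : Type w₂} [AddCommGroup N'] [PreMod Aᵐᵒᵖ N']
variable {M' : Type w₃} [AddCommGroup M'] [PreMod A M']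

/-- Functoriality of the tensor product in both variables, with respect to `A`-linear maps. -/
noncomputable def Tensor.map (f : N →+ N') (g : M →+ M')
    (hf : ∀ (a : A) (n : N), f (op a • n) = op a • f n)
    (hg : ∀ (a : A) (m : M), g (a • m) = a • g m) :
    Tensor A N M →+ Tensor A N' M' :=
  QuotientAddGroup.map _ _ (FreeAbelianGroup.lift fun p => FreeAbelianGroup.of (f p.1, g p.2))
    (by
      refine (AddSubgroup.closure_le _).mpr ?_
      rintro z ((⟨n₁, n₂, m, rfl⟩ | ⟨n, m₁, m₂, rfl⟩) | ⟨n, a, m, rfl⟩) <;>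
        refine AddSubgroup.mem_comap.mpr ?_
      · rw [map_sub, map_sub, FreeAbelianGroup.lift_apply_of, FreeAbelianGroup.lift_apply_of,
          FreeAbelianGroup.lift_apply_of]
        exact AddSubgroup.subset_closure
          (Or.inl (Or.inl ⟨f n₁, f n₂, g m, by rw [map_add]⟩))
      · rw [map_sub, map_sub, FreeAbelianGroup.lift_apply_of, FreeAbelianGroup.lift_apply_of,
          FreeAbelianGroup.lift_apply_of]
        exact AddSubgroup.subset_closure
          (Or.inl (Or.inr ⟨f n, g m₁, g m₂, by rw [map_add]⟩))
      · rw [map_sub, FreeAbelianGroup.lift_apply_of, FreeAbelianGroup.lift_apply_of]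
        exact AddSubgroup.subset_closure
          (Or.inr ⟨f n, a, g m, by rw [hf, hg]⟩))

lemma Tensor.map_mk (f : N →+ N') (g : M →+ M')
    (hf : ∀ (a : A) (n : N), f (op a • n) = op a • f n)
    (hg : ∀ (a : A) (m : M), g (a • m) = a • g m) (n : N) (m : M) :
    Tensor.map f g hf hg (Tensor.mk A N M n m) = Tensor.mk A N' M' (f n) (g m) := by
  show QuotientAddGroup.map _ _ _ _ _ = _
  rw [Tensor.mk]
  exact (QuotientAddGroup.map_mk ..).trans (congrArg _ (FreeAbelianGroup.lift_apply_of _ _))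

end Tensor

section TorExt

variable (A : Type u) [NonUnitalRing A] {I : Type v} (e : I → A)
variable (M : Type w) [AddCommGroup M] [PreMod A M]

/-- The canonical `A`-linear surjection from the canonical free cover
`(I × M) →₀ A` onto a unital module `M`, `single (i, m) a ↦ (a·eᵢ)·m`. -/
noncomputable def covHom : ((I × M) →₀ A) →+ M :=
  Finsupp.liftAddHom (fun p =>
    AddMonoidHom.mk' (fun a => (a * e p.1) • p.2)
      (fun a b => by
        show ((a + b) * e p.1) • p.2 = (a * e p.1) • p.2 + (b * e p.1) • p.2
        rw [add_mul, PreMod.add_smul']))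

lemma covHom_single (p : I × M) (a : A) :
    covHom A e M (Finsupp.single p a) = (a * e p.1) • p.2 := by
  rw [covHom, Finsupp.liftAddHom_apply_single]
  rfl

lemma covHom_linear (a : A) (f : (I × M) →₀ A) :
    covHom A e M (a • f) = a • covHom A e M f := by
  induction f using Finsupp.induction with
  | zero => rw [PreMod.psmul_zero, map_zero, PreMod.psmul_zero]
  | single_add p b f _ _ ih =>
    rw [PreMod.smul_add', map_add, map_add, PreMod.smul_add', ih,
      PreMod.finsupp_smul_single, covHom_single, covHom_single, mul_assoc,
      PreMod.mul_smul']

/-- The first syzygy of the canonical free cover of `M`. -/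
noncomputable def KK : AddSubgroup ((I × M) →₀ A) := (covHom A e M).ker

noncomputable instance KK.instPreMod : PreMod A ↥(KK A e M) where
  smul a x := ⟨a • x.1, by
    have hx : covHom A e M x.1 = 0 := x.2
    show covHom A e M (a • x.1) = 0
    rw [covHom_linear, hx, PreMod.psmul_zero]⟩
  smul_add' a x y := Subtype.ext (PreMod.smul_add' a x.1 y.1)
  add_smul' a b x := Subtype.ext (PreMod.add_smul' a b x.1)
  mul_smul' a b x := Subtype.ext (PreMod.mul_smul' a b x.1)

variable (N : Type w') [AddCommGroup N] [PreMod Aᵐᵒᵖ N]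

/-- The map `N ⊗_A K → N ⊗_A (⊕ A·eᵢ)` induced by the first syzygy of `M`. -/
noncomputable def torMap : Tensor A N ↥(KK A e M) →+ Tensor A N ((I × M) →₀ A) :=
  Tensor.map (AddMonoidHom.id N) ((KK A e M).subtype) (fun _ _ => rfl) (fun _ _ => rfl)

/-- `Tor₁^A(N, M)`, computed using the canonical free presentation of `M`. -/
noncomputable def Tor1 : AddSubgroup (Tensor A N ↥(KK A e M)) := (torMap A e M N).ker

variable (X : Type w') [AddCommGroup X] [PreMod A X]

/-- Restriction of `A`-linear maps along the inclusion of the first syzygy of `M`. -/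
noncomputable def resHom :
    ↥(LHom A ((I × M) →₀ A) X) →+ ↥(LHom A ↥(KK A e M) X) :=
  AddMonoidHom.mk'
    (fun g => ⟨((g : ((I × M) →₀ A) →+ X)).comp (KK A e M).subtype,
      fun a k => (g.2 : ∀ (a : A) (y : (I × M) →₀ A), (g : ((I × M) →₀ A) →+ X) (a • y)
        = a • (g : ((I × M) →₀ A) →+ X) y) a k.1⟩)
    (fun g g' => Subtype.ext (AddMonoidHom.ext (fun k => rfl)))

/-- `Ext¹_A(M, X)`, computed using the canonical free presentation of `M`. -/
noncomputable def Ext1 :=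
  (↥(LHom A ↥(KK A e M) X)) ⧸ (resHom A e M X).range

noncomputable instance : AddCommGroup (Ext1 A e M X) :=
  inferInstanceAs (AddCommGroup ((↥(LHom A ↥(KK A e M) X)) ⧸ (resHom A e M X).range))

end TorExt

section Character

/-- The divisible group `ℚ/ℤ`. -/
abbrev QZ : Type := AddCircle (1 : ℚ)

variable (A : Type u) [NonUnitalRing A] {I : Type v} (e : I → A)
variable (N : Type w) [AddCommGroup N] [PreMod Aᵐᵒᵖ N]

/-- The full character premodule `Hom_ℤ(N, ℚ/ℤ)` of a right `A`-premodule `N`,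
with action `(a·f)(n) = f(n·a)`. -/
instance instCharPreMod : PreMod A (N →+ QZ) where
  smul a f := f.comp (PreMod.smulHom N (op a))
  smul_add' a f g := by
    show (f + g).comp _ = f.comp _ + g.comp _
    rw [AddMonoidHom.add_comp]
  add_smul' a b f := by
    ext n
    show f (op (a + b) • n) = f (op a • n) + f (op b • n)
    rw [op_add, PreMod.add_smul', map_add]
  mul_smul' a b f := by
    ext n
    show f (op (a * b) • n) = f (op b • (op a • n))
    rw [op_mul, PreMod.mul_smul']

lemma char_smul_apply (a : A) (f : N →+ QZ) (n : N) :
    (a • f) n = f (op a • n) := rfl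

/-- The unital character module `N⁺ = ⊕ᵢ Hom_ℤ(N·eᵢ, ℚ/ℤ) = R_A(Hom_ℤ(N, ℚ/ℤ))`. -/
noncomputable abbrev CharMod [EnoughIdems A e] : Type w :=
  ↥(RA A e (N →+ QZ))

end Character

section FPn

variable (A : Type u) [NonUnitalRing A] {I : Type v} (e : I → A)

/-- A finite direct sum of standard left ideals `A·u j`. -/
abbrev FinFree {k : ℕ} (u : Fin k → A) : Type u := ∀ j : Fin k, ↥(rIdl A (u j))

/-- A left premodule over a ring with enough idempotents is of type `FPₙ` if it admits an
exact resolution `Pₙ → ⋯ → P₀ → F → 0` whose terms are finite direct sums of the standard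
projective modules `A·eᵢ`. -/
def IsFPn (n : ℕ) (F : Type w) [AddCommGroup F] [PreMod A F] : Prop :=
  ∃ (k : ℕ → ℕ) (ι : ∀ s : ℕ, Fin (k s) → I)
    (d : ∀ s : ℕ, ↥(LHom A (FinFree A fun j => e (ι (s + 1) j))
          (FinFree A fun j => e (ι s j))))
    (g : ↥(LHom A (FinFree A fun j => e (ι 0 j)) F)),
    Function.Surjective ⇑(g : (FinFree A fun j => e (ι 0 j)) →+ F) ∧
    (0 < n → AddMonoidHom.range
        ((d 0 : (FinFree A fun j => e (ι 1 j)) →+ (FinFree A fun j => e (ι 0 j))))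
      = AddMonoidHom.ker (g : (FinFree A fun j => e (ι 0 j)) →+ F)) ∧
    (∀ s : ℕ, s + 1 < n → AddMonoidHom.range
        ((d (s + 1) : (FinFree A fun j => e (ι (s + 2) j)) →+ (FinFree A fun j => e (ι (s + 1) j))))
      = AddMonoidHom.ker
        ((d s : (FinFree A fun j => e (ι (s + 1) j)) →+ (FinFree A fun j => e (ι s j)))))

end FPn

end EIMod

open EIMod PreMod MulOpposite

set_option maxHeartbeats 1000000

namespace EIModAux

open EIMod PreMod MulOpposite

universe x₁ x₂ x₃ x₄

/-- `A`-linearity predicate for additive maps of left premodules. -/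
def IsLin (A : Type u) [NonUnitalRing A] {M : Type x₁} {M' : Type x₂}
    [AddCommGroup M] [AddCommGroup M']
    [PreMod A M] [PreMod A M'] (f : M →+ M') : Prop :=
  ∀ (a : A) (m : M), f (a • m) = a • f m

/-- Linearity predicate for right premodules. -/
def IsLinOp (A : Type u) [NonUnitalRing A] {N : Type x₁} {N' : Type x₂}
    [AddCommGroup N] [AddCommGroup N']
    [PreMod Aᵐᵒᵖ N] [PreMod Aᵐᵒᵖ N'] (f : N →+ N') : Prop :=
  ∀ (a : A) (nn : N), f (op a • nn) = op a • f nn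

variable {A : Type u} [NonUnitalRing A]

section TensorBasics

variable {N : Type w} [AddCommGroup N] [PreMod Aᵐᵒᵖ N]
variable {M : Type w'} [AddCommGroup M] [PreMod A M]

lemma tensor_ind {motive : Tensor A N M → Prop}
    (mk : ∀ n m, motive (Tensor.mk A N M n m))
    (zero : motive 0)
    (add : ∀ x y, motive x → motive y → motive (x + y))
    (neg : ∀ x, motive x → motive (-x)) : ∀ x, motive x := by
  intro x
  have : ∀ w : FreeAbelianGroup (N × M),
      motive (QuotientAddGroup.mk (s := TensorRels A N M) w) := by
    intro w
    induction w using FreeAbelianGroup.induction_on with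
    | zero => exact zero
    | of p => exact mk p.1 p.2
    | neg p h =>
      have : (QuotientAddGroup.mk (s := TensorRels A N M) (-FreeAbelianGroup.of p))
          = -(QuotientAddGroup.mk (s := TensorRels A N M) (FreeAbelianGroup.of p)) := rfl
      rw [this]
      exact neg _ h
    | add a b ha hb =>
      have : (QuotientAddGroup.mk (s := TensorRels A N M) (a + b))
          = QuotientAddGroup.mk (s := TensorRels A N M) a
            + QuotientAddGroup.mk (s := TensorRels A N M) b := rfl
      rw [this]
      exact add _ _ ha hb
  obtain ⟨w, rfl⟩ : ∃ w, QuotientAddGroup.mk (s := TensorRels A N M) w = x :=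
    ⟨Quotient.out x, Quotient.out_eq' x⟩
  exact this w

lemma mk_add_left (n₁ n₂ : N) (m : M) :
    Tensor.mk A N M (n₁ + n₂) m = Tensor.mk A N M n₁ m + Tensor.mk A N M n₂ m := by
  show QuotientAddGroup.mk _ = QuotientAddGroup.mk
    (FreeAbelianGroup.of (n₁, m) + FreeAbelianGroup.of (n₂, m))
  rw [QuotientAddGroup.eq_iff_sub_mem, sub_add_eq_sub_sub]
  exact AddSubgroup.subset_closure (Or.inl (Or.inl ⟨n₁, n₂, m, rfl⟩))

lemma mk_add_right (n : N) (m₁ m₂ : M) :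
    Tensor.mk A N M n (m₁ + m₂) = Tensor.mk A N M n m₁ + Tensor.mk A N M n m₂ := by
  show QuotientAddGroup.mk _ = QuotientAddGroup.mk
    (FreeAbelianGroup.of (n, m₁) + FreeAbelianGroup.of (n, m₂))
  rw [QuotientAddGroup.eq_iff_sub_mem, sub_add_eq_sub_sub]
  exact AddSubgroup.subset_closure (Or.inl (Or.inr ⟨n, m₁, m₂, rfl⟩))

lemma mk_op_smul (a : A) (n : N) (m : M) :
    Tensor.mk A N M (op a • n) m = Tensor.mk A N M n (a • m) := by
  show QuotientAddGroup.mk _ = QuotientAddGroup.mk _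
  rw [QuotientAddGroup.eq_iff_sub_mem]
  exact AddSubgroup.subset_closure (Or.inr ⟨n, a, m, rfl⟩)

lemma mk_zero_right (n : N) : Tensor.mk A N M n 0 = 0 := by
  have := mk_add_right (A := A) n (0 : M) 0
  rw [add_zero] at this
  exact left_eq_add.mp this

lemma mk_zero_left (m : M) : Tensor.mk A N M 0 m = 0 := by
  have := mk_add_left (A := A) (0 : N) 0 m
  rw [add_zero] at this
  exact left_eq_add.mp this

lemma mk_neg_left (n : N) (m : M) : Tensor.mk A N M (-n) m = -Tensor.mk A N M n m := by
  have := mk_add_left (A := A) n (-n) m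
  rw [add_neg_cancel, mk_zero_left] at this
  exact eq_neg_of_add_eq_zero_right this.symm

lemma mk_neg_right (n : N) (m : M) : Tensor.mk A N M n (-m) = -Tensor.mk A N M n m := by
  have := mk_add_right (A := A) n m (-m)
  rw [add_neg_cancel, mk_zero_right] at this
  exact eq_neg_of_add_eq_zero_right this.symm

lemma mk_sub_right (n : N) (m₁ m₂ : M) :
    Tensor.mk A N M n (m₁ - m₂) = Tensor.mk A N M n m₁ - Tensor.mk A N M n m₂ := by
  rw [sub_eq_add_neg, mk_add_right, mk_neg_right, sub_eq_add_neg]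

/-- Build an additive map out of the tensor product from a bilinear balanced function. -/
noncomputable def tlift {G : Type x₁} [AddCommGroup G] (b : N → M → G)
    (h1 : ∀ n₁ n₂ m, b (n₁ + n₂) m = b n₁ m + b n₂ m)
    (h2 : ∀ n m₁ m₂, b n (m₁ + m₂) = b n m₁ + b n m₂)
    (h3 : ∀ (a : A) n m, b (op a • n) m = b n (a • m)) :
    Tensor A N M →+ G :=
  QuotientAddGroup.lift _ (FreeAbelianGroup.lift fun p => b p.1 p.2) <| by
    intro w hw
    have : w ∈ (FreeAbelianGroup.lift fun p => b p.1 p.2).ker := by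
      refine (AddSubgroup.closure_le _).mpr ?_ hw
      rintro z ((⟨n₁, n₂, m, rfl⟩ | ⟨n, m₁, m₂, rfl⟩) | ⟨n, a, m, rfl⟩) <;>
        simp [AddMonoidHom.mem_ker, FreeAbelianGroup.lift_apply_of, h1, h2, h3, sub_self]
    exact this

@[simp] lemma tlift_mk {G : Type x₁} [AddCommGroup G] (b : N → M → G)
    (h1 : ∀ n₁ n₂ m, b (n₁ + n₂) m = b n₁ m + b n₂ m)
    (h2 : ∀ n m₁ m₂, b n (m₁ + m₂) = b n m₁ + b n m₂)
    (h3 : ∀ (a : A) n m, b (op a • n) m = b n (a • m)) (n : N) (m : M) :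
    tlift b h1 h2 h3 (Tensor.mk A N M n m) = b n m := by
  show QuotientAddGroup.lift _ _ _ (QuotientAddGroup.mk _) = _
  rw [QuotientAddGroup.lift_mk', FreeAbelianGroup.lift_apply_of]

lemma hom_eq {G : Type x₁} [AddCommGroup G] (f g : Tensor A N M →+ G)
    (h : ∀ n m, f (Tensor.mk A N M n m) = g (Tensor.mk A N M n m)) : ∀ x, f x = g x := by
  refine tensor_ind h (by simp) (fun x y hx hy => ?_) (fun x hx => ?_)
  · rw [map_add, map_add, hx, hy]
  · rw [map_neg, map_neg, hx]

end TensorBasics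

section MapLemmas

variable {N : Type w} [AddCommGroup N] [PreMod Aᵐᵒᵖ N]
variable {M : Type w'} [AddCommGroup M] [PreMod A M]
variable {M₂ : Type x₁} [AddCommGroup M₂] [PreMod A M₂]
variable {M₃ : Type x₂} [AddCommGroup M₃] [PreMod A M₃]
variable {N₂ : Type x₃} [AddCommGroup N₂] [PreMod Aᵐᵒᵖ N₂]

lemma IsLin.comp {f : M →+ M₂} {g : M₂ →+ M₃} (hg : IsLin A g) (hf : IsLin A f) :
    IsLin A (g.comp f) := fun a m => by
  simp only [AddMonoidHom.comp_apply]
  rw [hf a m, hg a (f m)]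

/-- Tensoring a left-module map with the identity of `N`. -/
noncomputable def lmap (g : M →+ M₂) (hg : IsLin A g) : Tensor A N M →+ Tensor A N M₂ :=
  Tensor.map (AddMonoidHom.id N) g (fun _ _ => rfl) hg

@[simp] lemma lmap_mk (g : M →+ M₂) (hg : IsLin A g) (n : N) (m : M) :
    lmap g hg (Tensor.mk A N M n m) = Tensor.mk A N M₂ n (g m) :=
  Tensor.map_mk _ _ _ _ n m

/-- Tensoring a right-module map with the identity of `M`. -/
noncomputable def rmap (f : N →+ N₂) (hf : IsLinOp A f) : Tensor A N M →+ Tensor A N₂ M :=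
  Tensor.map f (AddMonoidHom.id M) hf (fun _ _ => rfl)

@[simp] lemma rmap_mk (f : N →+ N₂) (hf : IsLinOp A f) (n : N) (m : M) :
    rmap f hf (Tensor.mk A N M n m) = Tensor.mk A N₂ M (f n) m :=
  Tensor.map_mk _ _ _ _ n m

lemma lmap_comp (g : M →+ M₂) (hg : IsLin A g) (g' : M₂ →+ M₃) (hg' : IsLin A g')
    (x : Tensor A N M) :
    lmap g' hg' (lmap g hg x) = lmap (g'.comp g) (hg'.comp hg) x := by
  refine hom_eq ((lmap g' hg').comp (lmap g hg)) (lmap (g'.comp g) (hg'.comp hg)) ?_ x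
  intro n m
  simp

lemma lmap_rmap (g : M →+ M₂) (hg : IsLin A g) (f : N →+ N₂) (hf : IsLinOp A f)
    (x : Tensor A N M) :
    lmap g hg (rmap f hf x) = rmap f hf (lmap g hg x) := by
  refine hom_eq ((lmap g hg).comp (rmap f hf)) ((rmap f hf).comp (lmap g hg)) ?_ x
  intro n m
  simp

lemma lmap_surjective (g : M →+ M₂) (hg : IsLin A g) (hsurj : Function.Surjective g) :
    Function.Surjective (lmap (N := N) g hg) := by
  intro z
  refine tensor_ind (motive := fun z => ∃ u, lmap (N := N) g hg u = z) ?_ ?_ ?_ ?_ z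
  · intro n m
    obtain ⟨m', rfl⟩ := hsurj m
    exact ⟨Tensor.mk A N M n m', by simp⟩
  · exact ⟨0, map_zero _⟩
  · rintro x y ⟨x', rfl⟩ ⟨y', rfl⟩
    exact ⟨x' + y', map_add _ _ _⟩
  · rintro x ⟨x', rfl⟩
    exact ⟨-x', map_neg _ _⟩

/-- The two-resolutions comparison: if `N ⊗ K₂ → N ⊗ P₂` is injective, then so is
`N ⊗ K₁ → N ⊗ P₁`, given comparison data between the two "covers". -/
lemma transfer
    {K₁ : Type x₁} {P₁ : Type x₂} {K₂ : Type x₃} {P₂ : Type x₄}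
    [AddCommGroup K₁] [PreMod A K₁] [AddCommGroup P₁] [PreMod A P₁]
    [AddCommGroup K₂] [PreMod A K₂] [AddCommGroup P₂] [PreMod A P₂]
    (ι₁ : K₁ →+ P₁) (hι₁ : IsLin A ι₁) (ι₂ : K₂ →+ P₂) (hι₂ : IsLin A ι₂)
    (ψp : P₁ →+ P₂) (hψp : IsLin A ψp) (ψk : K₁ →+ K₂) (hψk : IsLin A ψk)
    (φk : K₂ →+ K₁) (hφk : IsLin A φk) (h : P₁ →+ K₁) (hh : IsLin A h)
    (comm : ∀ kk : K₁, ι₂ (ψk kk) = ψp (ι₁ kk))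
    (htri : ∀ kk : K₁, h (ι₁ kk) = φk (ψk kk) - kk)
    (hvan : ∀ z : Tensor A N K₂, lmap ι₂ hι₂ z = 0 → z = 0) :
    ∀ t : Tensor A N K₁, lmap ι₁ hι₁ t = 0 → t = 0 := by
  intro t ht
  have h1 : lmap ψk hψk t = 0 := by
    apply hvan
    have e1 : ∀ x : Tensor A N K₁, ((lmap ι₂ hι₂).comp (lmap ψk hψk)) x
        = ((lmap ψp hψp).comp (lmap ι₁ hι₁)) x := by
      refine hom_eq _ _ ?_
      intro n m
      simp [comm]
    have := e1 t
    simp only [AddMonoidHom.comp_apply] at this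
    rw [this, ht, map_zero]
  have e2 : ∀ x : Tensor A N K₁,
      lmap φk hφk (lmap ψk hψk x) = x + lmap h hh (lmap ι₁ hι₁ x) := by
    intro x
    rw [lmap_comp, lmap_comp]
    have := hom_eq (N := N) (lmap (φk.comp ψk) (hφk.comp hψk))
      ((AddMonoidHom.id _) + lmap ((h.comp ι₁)) (hh.comp hι₁)) ?_ x
    · simpa using this
    · intro n m
      have : φk (ψk m) = m + h (ι₁ m) := by
        have := htri m
        rw [eq_sub_iff_add_eq, add_comm] at this
        exact this.symm
      simp [this, mk_add_right]
  have := e2 t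
  rw [h1, map_zero, ht, map_zero, add_zero] at this
  exact this.symm

/-- Middle exactness of `N ⊗ -` applied to `Q₂ → Q₁ → K → 0`. -/
lemma mid_exact {Q₂ : Type x₁} {Q₁ : Type x₂} {K : Type x₃}
    [AddCommGroup Q₂] [PreMod A Q₂] [AddCommGroup Q₁] [PreMod A Q₁]
    [AddCommGroup K] [PreMod A K]
    (q : Q₂ →+ Q₁) (hq : IsLin A q) (p : Q₁ →+ K) (hp : IsLin A p)
    (psurj : Function.Surjective p) (hker : ∀ y, p y = 0 → ∃ w, q w = y) :
    ∀ x : Tensor A N Q₁, lmap p hp x = 0 → ∃ u : Tensor A N Q₂, lmap q hq u = x := by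
  classical
  set R := (lmap (N := N) q hq).range with hRdef
  have hR : ∀ (nn : N) (y : Q₁), (∃ w, q w = y) → Tensor.mk A N Q₁ nn y ∈ R := by
    rintro nn y ⟨w, rfl⟩
    exact ⟨Tensor.mk A N Q₂ nn w, lmap_mk _ _ _ _⟩
  let σ : K → Q₁ := fun kk => (psurj kk).choose
  have hσ : ∀ kk, p (σ kk) = kk := fun kk => (psurj kk).choose_spec
  have hdiff : ∀ (nn : N) (y₁ y₂ : Q₁), p y₁ = p y₂ →
      (QuotientAddGroup.mk (s := R) (Tensor.mk A N Q₁ nn y₁) : _ ⧸ R)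
        = QuotientAddGroup.mk (Tensor.mk A N Q₁ nn y₂) := by
    intro nn y₁ y₂ hy
    rw [QuotientAddGroup.eq_iff_sub_mem, ← mk_sub_right]
    exact hR nn _ (hker _ (by rw [map_sub, hy, sub_self]))
  let L : Tensor A N K →+ (Tensor A N Q₁) ⧸ R :=
    tlift (fun nn kk => QuotientAddGroup.mk (Tensor.mk A N Q₁ nn (σ kk)))
      (fun n₁ n₂ m => by rw [mk_add_left, QuotientAddGroup.mk_add])
      (fun nn m₁ m₂ => by
        rw [← QuotientAddGroup.mk_add, ← mk_add_right]
        exact hdiff nn _ _ (by rw [map_add, hσ, hσ, hσ]))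
      (fun a nn m => by
        rw [mk_op_smul]
        exact hdiff nn _ _ (by rw [hp, hσ, hσ]))
  have hL : ∀ x : Tensor A N Q₁, L (lmap p hp x) = QuotientAddGroup.mk x := by
    have := hom_eq (L.comp (lmap p hp)) (QuotientAddGroup.mk' R) ?_
    · intro x
      have h' := this x
      simpa using h'
    · intro nn m
      simp only [AddMonoidHom.comp_apply, lmap_mk, QuotientAddGroup.mk'_apply]
      show L (Tensor.mk A N K nn (p m)) = _
      have : L (Tensor.mk A N K nn (p m))
          = QuotientAddGroup.mk (Tensor.mk A N Q₁ nn (σ (p m))) := tlift_mk _ _ _ _ _ _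
      rw [this]
      exact hdiff nn _ _ (by rw [hσ])
  intro x hx
  have h0 : QuotientAddGroup.mk (s := R) x = 0 := by rw [← hL x, hx, map_zero]
  have hmem : x ∈ R := by rwa [QuotientAddGroup.eq_zero_iff] at h0
  exact hmem

end MapLemmas

section FinFree

variable {N : Type w} [AddCommGroup N] [PreMod Aᵐᵒᵖ N]

/-- `n ↦ n ⊗ -` as an additive map. -/
noncomputable def mkR {M : Type w'} [AddCommGroup M] [PreMod A M] (nn : N) :
    M →+ Tensor A N M :=
  AddMonoidHom.mk' (fun m => Tensor.mk A N M nn m) (mk_add_right nn)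

@[simp] lemma mkR_apply {M : Type w'} [AddCommGroup M] [PreMod A M] (nn : N) (m : M) :
    mkR (A := A) nn m = Tensor.mk A N M nn m := rfl

variable {kk : ℕ} {u : Fin kk → A}

/-- Evaluation map computing `N ⊗ (⊕ⱼ A·uⱼ)` inside `∏ⱼ N`. -/
noncomputable def evQ : Tensor A N (FinFree A u) →+ (Fin kk → N) :=
  tlift (fun nn x => fun j => op ((x j : A)) • nn)
    (fun n₁ n₂ m => by
      funext j
      exact PreMod.smul_add' _ n₁ n₂)
    (fun nn m₁ m₂ => by
      funext j
      show op (((m₁ j : A)) + ((m₂ j : A))) • nn = _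
      rw [op_add]
      exact PreMod.add_smul' _ _ nn)
    (fun a nn m => by
      funext j
      show op ((m j : A)) • (op a • nn) = op (a * (m j : A)) • nn
      rw [← PreMod.mul_smul', ← op_mul])

@[simp] lemma evQ_mk (nn : N) (x : FinFree A u) :
    evQ (Tensor.mk A N (FinFree A u) nn x) = fun j => op ((x j : A)) • nn :=
  tlift_mk _ _ _ _ _ _

variable (hu : ∀ j, u j * u j = u j)

/-- The `j`-th basis vector of `⊕ⱼ A·uⱼ`. -/
noncomputable def δQ (j : Fin kk) : FinFree A u :=
  Pi.single j (⟨u j, hu j⟩ : ↥(rIdl A (u j)))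

lemma single_eq_smul_δQ (j : Fin kk) (c : ↥(rIdl A (u j))) :
    (Pi.single j c : FinFree A u) = (c : A) • δQ hu j := by
  funext j'
  rw [PreMod.pi_smul_apply]
  unfold δQ
  by_cases h : j' = j
  · subst h
    rw [Pi.single_eq_same, Pi.single_eq_same]
    exact Subtype.ext c.2.symm
  · rw [Pi.single_eq_of_ne h, Pi.single_eq_of_ne h, PreMod.psmul_zero]

/-- The coevaluation `∏ⱼ N → N ⊗ (⊕ⱼ A·uⱼ)`. -/
noncomputable def coQ : (Fin kk → N) →+ Tensor A N (FinFree A u) :=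
  AddMonoidHom.mk' (fun v => ∑ j, Tensor.mk A N (FinFree A u) (op (u j) • v j) (δQ hu j))
    (by
      intro v w
      rw [← Finset.sum_add_distrib]
      refine Finset.sum_congr rfl fun j _ => ?_
      rw [Pi.add_apply, PreMod.smul_add', mk_add_left])

lemma coQ_apply (v : Fin kk → N) :
    coQ hu v = ∑ j, Tensor.mk A N (FinFree A u) (op (u j) • v j) (δQ hu j) := rfl

lemma coQ_evQ (z : Tensor A N (FinFree A u)) : coQ hu (evQ z) = z := by
  refine tensor_ind (motive := fun z => coQ hu (evQ z) = z) ?_ ?_ ?_ ?_ z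
  · intro nn x
    rw [evQ_mk, coQ_apply]
    have step : ∀ j : Fin kk, Tensor.mk A N (FinFree A u)
        (op (u j) • op ((x j : A)) • nn) (δQ hu j)
        = Tensor.mk A N (FinFree A u) nn (Pi.single j (x j)) := by
      intro j
      rw [← PreMod.mul_smul', ← op_mul]
      have hxj : (x j : A) * u j = (x j : A) := (x j).2
      rw [hxj, mk_op_smul, ← single_eq_smul_δQ]
    rw [Finset.sum_congr rfl fun j _ => step j]
    have hsum : ∑ j, Tensor.mk A N (FinFree A u) nn (Pi.single j (x j))
        = Tensor.mk A N (FinFree A u) nn (∑ j, Pi.single j (x j)) :=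
      (map_sum (mkR (A := A) (M := FinFree A u) nn) (fun j => Pi.single j (x j))
        Finset.univ).symm
    rw [hsum, Finset.univ_sum_single]
  · rw [map_zero, map_zero]
  · intro x y hx hy
    rw [map_add, map_add, hx, hy]
  · intro x hx
    rw [map_neg, map_neg, hx]

include hu in
lemma evQ_inj (z : Tensor A N (FinFree A u)) (h : evQ z = 0) : z = 0 := by
  rw [← coQ_evQ hu z, h, map_zero]

lemma evQ_natural {N₂ : Type x₃} [AddCommGroup N₂] [PreMod Aᵐᵒᵖ N₂]
    (f : N →+ N₂) (hf : IsLinOp A f) (z : Tensor A N (FinFree A u)) :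
    evQ (rmap f hf z) = fun j => f (evQ z j) := by
  refine tensor_ind (motive := fun z => evQ (rmap f hf z) = fun j => f (evQ z j))
    ?_ ?_ ?_ ?_ z
  · intro nn x
    rw [rmap_mk, evQ_mk, evQ_mk]
    funext j
    exact (hf _ _).symm
  · show evQ ((rmap f hf) (0 : Tensor A N (FinFree A u))) = _
    rw [map_zero, map_zero]
    funext j
    simp
  · intro x y hx hy
    rw [map_add, map_add, hx, hy]
    funext j
    simp
  · intro x hx
    rw [map_neg, map_neg, hx]
    funext j
    simp

end FinFree

section KerPre

variable {M : Type x₁} {Fm : Type x₂} [AddCommGroup M] [AddCommGroup Fm]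
  [PreMod A M] [PreMod A Fm]

/-- Premodule structure on the kernel of an `A`-linear map. -/
def kerPreMod (g : M →+ Fm) (hg : IsLin A g) : PreMod A ↥g.ker where
  smul a x := ⟨a • (x : M), by
    have hx : g (x : M) = 0 := AddMonoidHom.mem_ker.mp x.2
    have : g (a • (x : M)) = 0 := by rw [hg, hx, PreMod.psmul_zero]
    exact AddMonoidHom.mem_ker.mpr this⟩
  smul_add' a x y := Subtype.ext (PreMod.smul_add' a (x : M) (y : M))
  add_smul' a b x := Subtype.ext (PreMod.add_smul' a b (x : M))
  mul_smul' a b x := Subtype.ext (PreMod.mul_smul' a b (x : M))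

end KerPre

section Cover

variable {I : Type v} (e : I → A)
variable {Fm : Type x₁} [AddCommGroup Fm] [PreMod A Fm]
variable {kk : ℕ} (idx : Fin kk → I)

/-- A lift `⊕ⱼ A·e_{idx j} → (I × F) →₀ A` of an `A`-linear map to `F` along `covHom`. -/
noncomputable def toCov (mv : Fin kk → Fm) :
    FinFree A (fun j => e (idx j)) →+ ((I × Fm) →₀ A) :=
  AddMonoidHom.mk' (fun x => ∑ j, Finsupp.single (idx j, mv j) ((x j : A)))
    (by
      intro x y
      rw [← Finset.sum_add_distrib]
      refine Finset.sum_congr rfl fun j _ => ?_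
      show Finsupp.single _ (((x j : A)) + ((y j : A))) = _
      rw [Finsupp.single_add])

lemma toCov_lin (mv : Fin kk → Fm) : IsLin A (toCov e idx mv) := by
  intro a x
  show ∑ j, Finsupp.single (idx j, mv j) (((a • x) j : A))
      = a • ∑ j, Finsupp.single (idx j, mv j) ((x j : A))
  calc ∑ j, Finsupp.single (idx j, mv j) (((a • x) j : A))
      = ∑ j, a • Finsupp.single (idx j, mv j) ((x j : A)) := by
        refine Finset.sum_congr rfl fun j _ => ?_
        rw [PreMod.finsupp_smul_single]
        rfl
    _ = a • ∑ j, Finsupp.single (idx j, mv j) ((x j : A)) :=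
        (map_sum (PreMod.smulHom ((I × Fm) →₀ A) a) (fun j => Finsupp.single (idx j, mv j) ((x j : A))) Finset.univ).symm

lemma covHom_toCov [EnoughIdems A e] (g : FinFree A (fun j => e (idx j)) →+ Fm)
    (hg : IsLin A g) (x : FinFree A (fun j => e (idx j))) :
    covHom A e Fm (toCov e idx
      (fun j => g (δQ (fun j => EnoughIdems.idem (e := e) (idx j)) j)) x) = g x := by
  set hu : ∀ j, e (idx j) * e (idx j) = e (idx j) :=
    fun j => EnoughIdems.idem (e := e) (idx j) with hhu
  show covHom A e Fm (∑ j, Finsupp.single (idx j, g (δQ hu j)) ((x j : A))) = g x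
  rw [map_sum]
  have step : ∀ j : Fin kk, covHom A e Fm (Finsupp.single (idx j, g (δQ hu j)) ((x j : A)))
      = g (Pi.single j (x j)) := by
    intro j
    rw [covHom_single]
    show ((x j : A) * e (idx j)) • g (δQ hu j) = _
    rw [(x j).2, ← hg]
    exact congrArg g (single_eq_smul_δQ hu j (x j)).symm
  rw [Finset.sum_congr rfl fun j _ => step j, ← map_sum, Finset.univ_sum_single]

/-- A lift `(I × F) →₀ A → M` of `covHom` along a surjective `A`-linear map `M → F`. -/
noncomputable def fromCov {M : Type x₂} [AddCommGroup M] [PreMod A M]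
    (g : M →+ Fm) (hsurj : Function.Surjective g) : ((I × Fm) →₀ A) →+ M :=
  Finsupp.liftAddHom fun p =>
    AddMonoidHom.mk' (fun a => (a * e p.1) • (hsurj p.2).choose)
      (fun a b => by rw [add_mul, PreMod.add_smul'])

lemma fromCov_single {M : Type x₂} [AddCommGroup M] [PreMod A M]
    (g : M →+ Fm) (hsurj : Function.Surjective g) (p : I × Fm) (a : A) :
    fromCov e g hsurj (Finsupp.single p a) = (a * e p.1) • (hsurj p.2).choose := by
  rw [fromCov, Finsupp.liftAddHom_apply_single]
  rfl

lemma fromCov_lin {M : Type x₂} [AddCommGroup M] [PreMod A M]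
    (g : M →+ Fm) (hsurj : Function.Surjective g) : IsLin A (fromCov e g hsurj) := by
  intro a f
  induction f using Finsupp.induction with
  | zero => rw [PreMod.psmul_zero, map_zero, PreMod.psmul_zero]
  | single_add p b f _ _ ih =>
    rw [PreMod.smul_add', map_add, map_add, PreMod.smul_add', ih,
      PreMod.finsupp_smul_single, fromCov_single, fromCov_single, mul_assoc,
      PreMod.mul_smul']

lemma g_fromCov {M : Type x₂} [AddCommGroup M] [PreMod A M]
    (g : M →+ Fm) (hg : IsLin A g) (hsurj : Function.Surjective g)
    (x : (I × Fm) →₀ A) : g (fromCov e g hsurj x) = covHom A e Fm x := by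
  induction x using Finsupp.induction with
  | zero => rw [map_zero, map_zero, map_zero]
  | single_add p b f _ _ ih =>
    rw [map_add, map_add, map_add, ih, fromCov_single, covHom_single, hg,
      (hsurj p.2).choose_spec]

end Cover

section Prod

variable {I : Type v} (e : I → A) [EnoughIdems A e]
variable {S : Type x₁} (Nf : S → Type x₂) [∀ α, AddCommGroup (Nf α)]
  [∀ α, PreMod Aᵐᵒᵖ (Nf α)]

/-- Projection from the unital product onto a factor. -/
noncomputable def projT (α : S) :
    ↥(RA Aᵐᵒᵖ (fun i => op (e i)) (∀ β, Nf β)) →+ Nf α :=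
  AddMonoidHom.mk' (fun t => (t : ∀ β, Nf β) α) (fun x y => rfl)

lemma projT_lin (α : S) : IsLinOp A (projT e Nf α) := fun a t => rfl

lemma projT_tensor_inj {kk : ℕ} {u : Fin kk → A} (hu : ∀ j, u j * u j = u j)
    (z : Tensor A (↥(RA Aᵐᵒᵖ (fun i => op (e i)) (∀ β, Nf β))) (FinFree A u))
    (h : ∀ α, rmap (projT e Nf α) (projT_lin e Nf α) z = 0) : z = 0 := by
  refine evQ_inj hu z ?_
  funext j
  have hα : ∀ α, projT e Nf α (evQ z j) = 0 := by
    intro α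
    have hnat := evQ_natural (projT e Nf α) (projT_lin e Nf α) z
    rw [h α, map_zero] at hnat
    have := congrFun hnat j
    rw [Pi.zero_apply] at this
    exact this.symm
  refine Subtype.ext ?_
  show (evQ z j).val = (0 : ↥(RA Aᵐᵒᵖ (fun i => op (e i)) (∀ β, Nf β))).val
  funext α
  exact hα α

lemma projT_tensor_surj {kk : ℕ} (idx : Fin kk → I)
    (us : ∀ α, Tensor A (Nf α) (FinFree A (fun j => e (idx j)))) :
    ∃ U : Tensor A (↥(RA Aᵐᵒᵖ (fun i => op (e i)) (∀ β, Nf β)))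
        (FinFree A (fun j => e (idx j))),
      ∀ α, rmap (projT e Nf α) (projT_lin e Nf α) U = us α := by
  have hu : ∀ j, e (idx j) * e (idx j) = e (idx j) :=
    fun j => EnoughIdems.idem (e := e) (idx j)
  refine ⟨∑ j, Tensor.mk A _ (FinFree A (fun j => e (idx j)))
    ⟨op (e (idx j)) • (fun α => evQ (us α) j),
      AddSubgroup.subset_closure ⟨idx j, (fun α => evQ (us α) j), rfl⟩⟩
    (δQ hu j), ?_⟩
  intro α
  rw [map_sum]
  have step : ∀ j : Fin kk, rmap (projT e Nf α) (projT_lin e Nf α)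
      (Tensor.mk A _ (FinFree A (fun j => e (idx j)))
        ⟨op (e (idx j)) • (fun α => evQ (us α) j),
          AddSubgroup.subset_closure ⟨idx j, (fun α => evQ (us α) j), rfl⟩⟩
        (δQ hu j))
      = Tensor.mk A (Nf α) (FinFree A (fun j => e (idx j)))
          (op (e (idx j)) • evQ (us α) j) (δQ hu j) := by
    intro j
    rw [rmap_mk]
    rfl
  rw [Finset.sum_congr rfl fun j _ => step j, ← coQ_apply hu, coQ_evQ]

end Prod




end EIModAux

open EIModAux



/-- Let `n ≥ 2` and `A` a ring with enough idempotents. The class of unital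
right `A`-modules `N` with `Tor₁^A(N, F) = 0` for all (unital) left `A`-modules `F` of type
`FPₙ` in a given class is closed under products in the category of unital right `A`-modules:
if `Tor₁^A(N_α, F) = 0` for all `α`, then `Tor₁^A(∏^u_α N_α, F) = 0`. -/
theorem top_orthogonal_of_FPn_closed_under_unital_products
    (A : Type u) [NonUnitalRing A] {I : Type v} (e : I → A) [EnoughIdems A e]
    (n : ℕ) (hn : 2 ≤ n)
    (F : Type u) [AddCommGroup F] [PreMod A F] (hF : IsFPn A e n F)
    (S : Type w) (N : S → Type u) [∀ α, AddCommGroup (N α)] [∀ α, PreMod Aᵐᵒᵖ (N α)]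
    (hN : ∀ α, IsUnital Aᵐᵒᵖ (fun i => op (e i)) (N α))
    (hvanish : ∀ α, Tor1 A e F (N α) = ⊥) :
    Tor1 A e F (↥(RA Aᵐᵒᵖ (fun i => op (e i)) (∀ β, N β))) = ⊥ := by
  classical
  obtain ⟨k, ι, d, g, hgsurj, hd0, hd1⟩ := hF
  have hd0' := hd0 (by omega)
  have hd1' := hd1 0 (by omega)
  -- notation
  set T : Type (max u w) := ↥(RA Aᵐᵒᵖ (fun i => op (e i)) (∀ β, N β)) with hTdef
  let Q₀ := FinFree A fun j => e (ι 0 j)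
  let Q₁ := FinFree A fun j => e (ι 1 j)
  let Q₂ := FinFree A fun j => e (ι 2 j)
  let g₀ : Q₀ →+ F := (g : Q₀ →+ F)
  have hg₀lin : IsLin A g₀ := g.2
  let d0 : Q₁ →+ Q₀ := (d 0 : Q₁ →+ Q₀)
  have hd0lin : IsLin A d0 := (d 0).2
  let d1 : Q₂ →+ Q₁ := (d 1 : Q₂ →+ Q₁)
  have hd1lin : IsLin A d1 := (d 1).2
  letI : PreMod A ↥g₀.ker := kerPreMod g₀ hg₀lin
  let ι' : ↥g₀.ker →+ Q₀ := g₀.ker.subtype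
  have hι'lin : IsLin A ι' := fun _ _ => rfl
  let ιK : ↥(KK A e F) →+ ((I × F) →₀ A) := (KK A e F).subtype
  have hιKlin : IsLin A ιK := fun _ _ => rfl
  have hcovlin : IsLin A (covHom A e F) := covHom_linear A e F
  -- comparison maps between the two covers of F
  have hu0 : ∀ j, e (ι 0 j) * e (ι 0 j) = e (ι 0 j) :=
    fun j => EnoughIdems.idem (e := e) (ι 0 j)
  let tC : Q₀ →+ ((I × F) →₀ A) := toCov e (ι 0) (fun j => g₀ (δQ hu0 j))
  have htClin : IsLin A tC := toCov_lin e (ι 0) _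
  have htC : ∀ x, covHom A e F (tC x) = g₀ x := covHom_toCov e (ι 0) g₀ hg₀lin
  let fC : ((I × F) →₀ A) →+ Q₀ := fromCov e g₀ hgsurj
  have hfClin : IsLin A fC := fromCov_lin e g₀ hgsurj
  have hfC : ∀ x, g₀ (fC x) = covHom A e F x := g_fromCov e g₀ hg₀lin hgsurj
  -- induced maps on the syzygies
  let ψk : ↥g₀.ker →+ ↥(KK A e F) := AddMonoidHom.mk'
    (fun x => ⟨tC (x : Q₀), AddMonoidHom.mem_ker.mpr (by
      rw [htC]
      exact AddMonoidHom.mem_ker.mp x.2)⟩)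
    (fun x y => Subtype.ext (map_add tC _ _))
  have hψklin : IsLin A ψk := fun a x => Subtype.ext (htClin a (x : Q₀))
  let φk : ↥(KK A e F) →+ ↥g₀.ker := AddMonoidHom.mk'
    (fun x => ⟨fC ((x : (I × F) →₀ A)), AddMonoidHom.mem_ker.mpr (by
      rw [hfC]
      exact AddMonoidHom.mem_ker.mp x.2)⟩)
    (fun x y => Subtype.ext (map_add fC _ _))
  have hφklin : IsLin A φk := fun a x => Subtype.ext (hfClin a _)
  let h₁ : Q₀ →+ ↥g₀.ker := AddMonoidHom.mk'
    (fun x => ⟨fC (tC x) - x, AddMonoidHom.mem_ker.mpr (by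
      rw [map_sub, hfC, htC, sub_self])⟩)
    (fun x y => Subtype.ext (by
      show fC (tC (x + y)) - (x + y) = (fC (tC x) - x) + (fC (tC y) - y)
      rw [map_add, map_add]
      abel))
  have hh₁lin : IsLin A h₁ := by
    intro a x
    refine Subtype.ext ?_
    show fC (tC (a • x)) - a • x = a • (fC (tC x) - x)
    rw [htClin, hfClin, sub_eq_add_neg, sub_eq_add_neg, PreMod.smul_add',
      PreMod.psmul_neg]
  let h₂ : ((I × F) →₀ A) →+ ↥(KK A e F) := AddMonoidHom.mk'
    (fun x => ⟨tC (fC x) - x, AddMonoidHom.mem_ker.mpr (by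
      rw [map_sub, htC, hfC, sub_self])⟩)
    (fun x y => Subtype.ext (by
      show tC (fC (x + y)) - (x + y) = (tC (fC x) - x) + (tC (fC y) - y)
      rw [map_add, map_add]
      abel))
  have hh₂lin : IsLin A h₂ := by
    intro a x
    refine Subtype.ext ?_
    show tC (fC (a • x)) - a • x = a • (tC (fC x) - x)
    rw [hfClin, htClin, sub_eq_add_neg, sub_eq_add_neg, PreMod.smul_add',
      PreMod.psmul_neg]
  -- Step 1: per-factor vanishing transfers to the finite presentation
  have vanK' : ∀ α, ∀ z : Tensor A (N α) ↥g₀.ker, lmap ι' hι'lin z = 0 → z = 0 := by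
    intro α
    refine transfer ι' hι'lin ιK hιKlin tC htClin ψk hψklin φk hφklin h₁ hh₁lin
      (fun _ => rfl) (fun _ => Subtype.ext rfl) ?_
    intro z hz
    have hmem : z ∈ Tor1 A e F (N α) := hz
    rw [hvanish α] at hmem
    exact AddSubgroup.mem_bot.mp hmem
  -- Step 2: vanishing for the unital product, via the finite presentation
  have vanK'T : ∀ t : Tensor A T ↥g₀.ker, lmap ι' hι'lin t = 0 → t = 0 := by
    intro t ht
    let p : Q₁ →+ ↥g₀.ker := AddMonoidHom.mk'
      (fun y => ⟨d0 y, hd0' ▸ AddMonoidHom.mem_range.mpr ⟨y, rfl⟩⟩)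
      (fun x y => Subtype.ext (map_add d0 _ _))
    have hplin : IsLin A p := fun a y => Subtype.ext (hd0lin a y)
    have hpsurj : Function.Surjective p := by
      intro x
      have hx : (x : Q₀) ∈ AddMonoidHom.range d0 := by
        rw [hd0']
        exact x.2
      obtain ⟨y, hy⟩ := hx
      exact ⟨y, Subtype.ext hy⟩
    have hkerp : ∀ y, p y = 0 → ∃ w, d1 w = y := by
      intro y hy
      have : y ∈ AddMonoidHom.ker d0 := by
        have hval : d0 y = 0 := congrArg Subtype.val hy
        exact AddMonoidHom.mem_ker.mpr hval
      rw [← hd1'] at this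
      exact this
    -- each component of t vanishes
    have hα0 : ∀ α, rmap (projT e N α) (projT_lin e N α) t = 0 := by
      intro α
      refine vanK' α _ ?_
      rw [lmap_rmap, ht, map_zero]
    obtain ⟨s, hs⟩ := lmap_surjective p hplin hpsurj t
    have hsα : ∀ α, ∃ uα : Tensor A (N α) Q₂,
        lmap d1 hd1lin uα = rmap (projT e N α) (projT_lin e N α) s := by
      intro α
      refine mid_exact d1 hd1lin p hplin hpsurj hkerp _ ?_
      rw [lmap_rmap, hs]
      exact hα0 α
    choose us hus using hsα
    obtain ⟨U, hU⟩ := projT_tensor_surj e N (ι 2) us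
    have hu1 : ∀ j, e (ι 1 j) * e (ι 1 j) = e (ι 1 j) :=
      fun j => EnoughIdems.idem (e := e) (ι 1 j)
    have hsU : s = lmap d1 hd1lin U := by
      have hzero : ∀ α, rmap (projT e N α) (projT_lin e N α)
          (s - lmap d1 hd1lin U) = 0 := by
        intro α
        rw [map_sub, ← lmap_rmap, hU α, hus α, sub_self]
      have := projT_tensor_inj e N hu1 (s - lmap d1 hd1lin U) hzero
      exact sub_eq_zero.mp this
    have hzerocomp : ∀ x : Tensor A T Q₂,
        lmap (p.comp d1) (hplin.comp hd1lin) x = 0 := by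
      intro x
      have hpt : ∀ m : Q₂, p (d1 m) = 0 := by
        intro m
        have : d1 m ∈ AddMonoidHom.ker d0 := by
          rw [← hd1']
          exact ⟨m, rfl⟩
        exact Subtype.ext (AddMonoidHom.mem_ker.mp this)
      have := hom_eq (lmap (N := T) (p.comp d1) (hplin.comp hd1lin)) 0 ?_ x
      · simpa using this
      · intro nn m
        show lmap (p.comp d1) (hplin.comp hd1lin) (Tensor.mk A T Q₂ nn m) = 0
        rw [lmap_mk]
        show Tensor.mk A T ↥g₀.ker nn (p (d1 m)) = 0
        rw [hpt m, mk_zero_right]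
    rw [← hs, hsU, lmap_comp]
    exact hzerocomp U
  -- Step 3: transfer back to the canonical presentation
  have vanKKT : ∀ z : Tensor A T ↥(KK A e F), lmap ιK hιKlin z = 0 → z = 0 := by
    refine transfer ιK hιKlin ι' hι'lin fC hfClin φk hφklin ψk hψklin h₂ hh₂lin
      (fun _ => rfl) (fun _ => Subtype.ext rfl) ?_
    exact vanK'T
  refine (AddSubgroup.eq_bot_iff_forall _).mpr ?_
  intro z hz
  exact vanKKT z hz
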